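/- Let m ∈ ℓ∞(I) and let R = {R_i} ∈ C₀(I,B(H)) (i.e. for every ε > 0 there is a finite set J ⊆ I with ‖R_i‖ < ε for all i ∉ J) be such that every R_i has finite rank and sup_{i∈I} rank(R_i) < ∞. Then the diagonal operator D_{mR} : 𝔥 → 𝔥 is compact; in particular, for any Bessel fusion sequences (W,ω) and (V,υ) the Bessel fusion multiplier M_{mR,V,W} is a compact operator on H. -/

import Mathlib

noncomputable section

open ContinuousLinearMap
open scoped ENNReal InnerProductSpace

/-- Orthogonal projection onto a closed subspace, as an operator on `H`. -/
def fproj {H : Type*} [NormedAddCommGroup H] [InnerProductSpace ℂ H] [CompleteSpace H]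
    (W : Submodule ℂ H) (hW : IsClosed (W : Set H)) : H →L[ℂ] H :=
  haveI : CompleteSpace W := hW.completeSpace_coe
  W.subtypeL.comp (Submodule.orthogonalProjectionOnto W)

/-- A continuous linear map with finite dimensional range is a compact operator. -/
lemma isCompactOperator_of_finDimRange {E F : Type*} [NormedAddCommGroup E] [NormedSpace ℂ E]
    [NormedAddCommGroup F] [NormedSpace ℂ F] (f : E →L[ℂ] F)
    (h : FiniteDimensional ℂ ↥(LinearMap.range (f : E →ₗ[ℂ] F))) : IsCompactOperator ⇑f := by
  haveI := h
  set S : Submodule ℂ F := LinearMap.range (f : E →ₗ[ℂ] F) with hS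
  let g : E →L[ℂ] S := f.codRestrict S (fun x => LinearMap.mem_range_self _ x)
  refine ⟨Subtype.val '' closure (⇑g '' Metric.closedBall 0 1), ?_, ?_⟩
  · refine IsCompact.image ?_ continuous_subtype_val
    refine ((isCompact_closedBall (0 : S) ‖g‖).of_isClosed_subset isClosed_closure ?_)
    refine closure_minimal ?_ Metric.isClosed_closedBall
    rintro y ⟨x, hx, rfl⟩
    rw [Metric.mem_closedBall, dist_zero_right]
    calc ‖g x‖ ≤ ‖g‖ * ‖x‖ := g.le_opNorm x
    _ ≤ ‖g‖ * 1 := by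
        have := mem_closedBall_zero_iff.mp hx
        exact mul_le_mul_of_nonneg_left this (norm_nonneg g)
    _ = ‖g‖ := mul_one _
  · refine Filter.mem_of_superset (Metric.closedBall_mem_nhds (0 : E) one_pos) ?_
    intro x hx
    exact ⟨g x, subset_closure ⟨x, hx, rfl⟩, rfl⟩

section Aux

variable {H : Type*} [NormedAddCommGroup H] [InnerProductSpace ℂ H] [CompleteSpace H]
  {I : Type*} [DecidableEq I]

/-- Coordinate evaluation on `ℓ²(I, H)` as a continuous linear map. -/
def evalCLM (i : I) : lp (fun _ : I => H) 2 →L[ℂ] H :=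
  LinearMap.mkContinuous
    { toFun := fun x => x i
      map_add' := fun x y => rfl
      map_smul' := fun c x => rfl }
    1 (fun x => by rw [one_mul]; exact lp.norm_apply_le_norm two_ne_zero x i)

/-- Coordinate inclusion into `ℓ²(I, H)` as a continuous linear map. -/
def singleCLM (i : I) : H →L[ℂ] lp (fun _ : I => H) 2 :=
  LinearMap.mkContinuous
    { toFun := fun a => lp.single 2 i a
      map_add' := fun a b => by
        ext j
        by_cases h : j = i
        · subst h
          simp [lp.single_apply_self]
        · simp [lp.single_apply_ne 2 i _ h]
      map_smul' := fun c a => by simp [lp.single_smul] }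
    1 (fun a => by
      have := lp.norm_single (E := fun _ : I => H) (p := 2) (by norm_num) i a
      simpa using this.le)

omit [CompleteSpace H] in
@[simp] lemma singleCLM_apply (i : I) (a : H) :
    (singleCLM (H := H) i) a = lp.single 2 i a := rfl

omit [CompleteSpace H] in
@[simp] lemma evalCLM_apply (i : I) (x : lp (fun _ : I => H) 2) :
    (evalCLM (H := H) i) x = x i := rfl

omit [DecidableEq I] in
lemma bessel_key (W : I → Submodule ℂ H) (hW : ∀ i, IsClosed ((W i) : Set H)) (ω : I → ℝ)
    (hω : ∀ i, 0 ≤ ω i) (x : H) (i : I) :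
    ‖(ω i : ℂ) • fproj (W i) (hW i) x‖ ^ ((2 : ℝ≥0∞).toReal) =
      ω i ^ 2 * ‖fproj (W i) (hW i) x‖ ^ 2 := by
  rw [norm_smul, Complex.norm_real, Real.norm_eq_abs, abs_of_nonneg (hω i),
    show ((2 : ℝ≥0∞).toReal) = ((2 : ℕ) : ℝ) by norm_num, Real.rpow_natCast, mul_pow]

omit [DecidableEq I] in
lemma bessel_mem (W : I → Submodule ℂ H) (hW : ∀ i, IsClosed ((W i) : Set H)) (ω : I → ℝ)
    (hω : ∀ i, 0 ≤ ω i) (β : ℝ)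
    (hβ : ∀ x : H, ∃ s : ℝ,
      HasSum (fun i => ω i ^ 2 * ‖fproj (W i) (hW i) x‖ ^ 2) s ∧ s ≤ β * ‖x‖ ^ 2)
    (x : H) : Memℓp (fun i => (ω i : ℂ) • fproj (W i) (hW i) x) 2 := by
  obtain ⟨s, hs, -⟩ := hβ x
  apply memℓp_gen
  simpa only [bessel_key W hW ω hω x] using hs.summable

/-- The analysis operator of a Bessel fusion sequence. -/
def besselCLM (W : I → Submodule ℂ H) (hW : ∀ i, IsClosed ((W i) : Set H)) (ω : I → ℝ)
    (hω : ∀ i, 0 ≤ ω i) (β : ℝ)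
    (hβ : ∀ x : H, ∃ s : ℝ,
      HasSum (fun i => ω i ^ 2 * ‖fproj (W i) (hW i) x‖ ^ 2) s ∧ s ≤ β * ‖x‖ ^ 2) :
    H →L[ℂ] lp (fun _ : I => H) 2 :=
  LinearMap.mkContinuous
    { toFun := fun x =>
        (⟨fun i => (ω i : ℂ) • fproj (W i) (hW i) x, bessel_mem W hW ω hω β hβ x⟩ :
          lp (fun _ : I => H) 2)
      map_add' := fun x y => Subtype.ext (funext fun i => by
        show (ω i : ℂ) • fproj (W i) (hW i) (x + y) =
          (ω i : ℂ) • fproj (W i) (hW i) x + (ω i : ℂ) • fproj (W i) (hW i) y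
        rw [map_add, smul_add])
      map_smul' := fun c x => Subtype.ext (funext fun i => by
        show (ω i : ℂ) • fproj (W i) (hW i) (c • x) = c • ((ω i : ℂ) • fproj (W i) (hW i) x)
        rw [map_smul, smul_comm]) }
    (Real.sqrt (max β 0))
    (fun x => by
      obtain ⟨s, hs, hsle⟩ := hβ x
      refine lp.norm_le_of_tsum_le (by norm_num)
        (mul_nonneg (Real.sqrt_nonneg _) (norm_nonneg x)) ?_
      have hco : ∑' i, ‖(ω i : ℂ) • fproj (W i) (hW i) x‖ ^ ((2 : ℝ≥0∞).toReal) = s := by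
        simp only [bessel_key W hW ω hω x]
        exact hs.tsum_eq
      calc ∑' i, ‖(ω i : ℂ) • fproj (W i) (hW i) x‖ ^ ((2 : ℝ≥0∞).toReal) = s := hco
      _ ≤ β * ‖x‖ ^ 2 := hsle
      _ ≤ max β 0 * ‖x‖ ^ 2 := by
          have : (0:ℝ) ≤ ‖x‖ ^ 2 := sq_nonneg _
          nlinarith [le_max_left β 0]
      _ = (Real.sqrt (max β 0) * ‖x‖) ^ ((2 : ℝ≥0∞).toReal) := by
          rw [show ((2 : ℝ≥0∞).toReal) = ((2 : ℕ) : ℝ) by norm_num, Real.rpow_natCast, mul_pow,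
            Real.sq_sqrt (le_max_right β 0)])

omit [DecidableEq I] in
@[simp] lemma besselCLM_apply (W : I → Submodule ℂ H) (hW : ∀ i, IsClosed ((W i) : Set H))
    (ω : I → ℝ) (hω : ∀ i, 0 ≤ ω i) (β : ℝ)
    (hβ : ∀ x : H, ∃ s : ℝ,
      HasSum (fun i => ω i ^ 2 * ‖fproj (W i) (hW i) x‖ ^ 2) s ∧ s ≤ β * ‖x‖ ^ 2)
    (x : H) (i : I) :
    (besselCLM W hW ω hω β hβ x : ∀ _ : I, H) i = (ω i : ℂ) • fproj (W i) (hW i) x := rfl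

omit [DecidableEq I] in
lemma fproj_inner (U : Submodule ℂ H) (hU : IsClosed (U : Set H)) (a b : H) :
    ⟪fproj U hU a, b⟫_ℂ = ⟪a, fproj U hU b⟫_ℂ := by
  haveI : CompleteSpace U := hU.completeSpace_coe
  exact Submodule.inner_starProjection_left_eq_right U a b

end Aux

/-- if `m ∈ ℓ∞(I)` and `R ∈ C₀(I,B(H))` consists of finite-rank operators of
uniformly bounded rank, then `D_{mR}` is compact and every `(m,R)`-Bessel fusion multiplier
`M_{mR,V,W}` is compact. -/
theorem multiplier_compact_of_C0_operator_family
    {H : Type*} [NormedAddCommGroup H] [InnerProductSpace ℂ H] [CompleteSpace H]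
    [TopologicalSpace.SeparableSpace H]
    {I : Type*} [Countable I]
    (m : I → ℂ)
    (hm : BddAbove (Set.range fun i => ‖m i‖))
    (R : I → H →L[ℂ] H) (hR : BddAbove (Set.range fun i => ‖R i‖))
    (hR0 : ∀ ε : ℝ, 0 < ε → ∃ F : Finset I, ∀ i ∉ F, ‖R i‖ < ε)
    (hfin : ∀ i, FiniteDimensional ℂ ↥(LinearMap.range (R i : H →ₗ[ℂ] H)))
    (n : ℕ) (hrank : ∀ i, Module.finrank ℂ ↥(LinearMap.range (R i : H →ₗ[ℂ] H)) ≤ n)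
    -- the diagonal operator D_{mR}
    (D : lp (fun _ : I => H) 2 →L[ℂ] lp (fun _ : I => H) 2)
    (hD : ∀ (x : lp (fun _ : I => H) 2) (i : I), D x i = m i • (R i) (x i)) :
    IsCompactOperator ⇑D ∧
    -- and every (m,R)-Bessel fusion multiplier is compact
    (∀ (W V : I → Submodule ℂ H)
      (hW : ∀ i, IsClosed ((W i) : Set H)) (hV : ∀ i, IsClosed ((V i) : Set H))
      (ω υ : I → ℝ),
      (∀ i, 0 ≤ ω i ∧ (ω i = 0 ↔ W i = ⊥)) →
      (∀ i, 0 ≤ υ i ∧ (υ i = 0 ↔ V i = ⊥)) →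
      (∃ βW : ℝ, ∀ x : H, ∃ s : ℝ,
        HasSum (fun i => ω i ^ 2 * ‖fproj (W i) (hW i) x‖ ^ 2) s ∧ s ≤ βW * ‖x‖ ^ 2) →
      (∃ βV : ℝ, ∀ x : H, ∃ s : ℝ,
        HasSum (fun i => υ i ^ 2 * ‖fproj (V i) (hV i) x‖ ^ 2) s ∧ s ≤ βV * ‖x‖ ^ 2) →
      ∀ M : H →L[ℂ] H,
        (∀ x : H, HasSum
          (fun i => m i • (υ i * ω i) • fproj (V i) (hV i) ((R i) (fproj (W i) (hW i) x)))
          (M x)) →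
        IsCompactOperator ⇑M) := by
  classical
  obtain ⟨Cm0, hCm0⟩ := hm
  set Cm : ℝ := max Cm0 0 with hCmdef
  have hCm : ∀ i, ‖m i‖ ≤ Cm := fun i =>
    le_trans (hCm0 ⟨i, rfl⟩) (le_max_left _ _)
  have hCm0' : 0 ≤ Cm := le_max_right _ _
  have h2 : ((2 : ℝ≥0∞).toReal) = ((2 : ℕ) : ℝ) := by norm_num
  -- Part 1 : D is compact
  have hDcpt : IsCompactOperator ⇑D := by
    have hmem : D ∈ closure {f : lp (fun _ : I => H) 2 →L[ℂ] lp (fun _ : I => H) 2 |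
        IsCompactOperator ⇑f} := by
      rw [Metric.mem_closure_iff]
      intro ε hε
      set ε' : ℝ := ε / (2 * (Cm + 1)) with hε'def
      have hε' : 0 < ε' := by positivity
      obtain ⟨F, hF⟩ := hR0 ε' hε'
      set DF : lp (fun _ : I => H) 2 →L[ℂ] lp (fun _ : I => H) 2 :=
        ∑ i ∈ F, (singleCLM i).comp ((m i • R i).comp (evalCLM i)) with hDFdef
      have hDFcpt : ∀ G : Finset I, IsCompactOperator
          ⇑(∑ i ∈ G, (singleCLM i).comp ((m i • R i).comp (evalCLM (H := H) i))) := by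
        intro G
        induction G using Finset.cons_induction with
        | empty => simpa using isCompactOperator_zero
        | cons a s ha ih =>
          rw [Finset.sum_cons]
          have hsummand : IsCompactOperator
              ⇑((singleCLM a).comp ((m a • R a).comp (evalCLM (H := H) a))) := by
            have h1 : IsCompactOperator ⇑(R a) :=
              isCompactOperator_of_finDimRange _ (hfin a)
            have h2 : IsCompactOperator ⇑(m a • R a) := by
              have := h1.smul (m a)
              exact this
            have h3 := (h2.comp_clm (evalCLM (H := H) a)).clm_comp (singleCLM a)
            exact h3
          have := hsummand.add ih
          exact this
      refine ⟨DF, hDFcpt F, ?_⟩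
      -- the distance estimate
      have hcoord : ∀ (x : lp (fun _ : I => H) 2) (j : I),
          ((D - DF) x : ∀ _ : I, H) j =
            if j ∈ F then 0 else m j • R j (x j) := by
        intro x j
        have hDFx : (DF x : ∀ _ : I, H) j =
            if j ∈ F then m j • R j (x j) else 0 := by
          rw [hDFdef]
          rw [ContinuousLinearMap.sum_apply, lp.coeFn_sum, Finset.sum_apply]
          simp only [ContinuousLinearMap.comp_apply, evalCLM_apply, singleCLM_apply,
            ContinuousLinearMap.smul_apply]
          simp [lp.single_apply, Finset.sum_dite_eq, Pi.single_apply]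
        have : ((D - DF) x : ∀ _ : I, H) j = (D x : ∀ _ : I, H) j - (DF x : ∀ _ : I, H) j := by
          rw [ContinuousLinearMap.sub_apply, lp.coeFn_sub, Pi.sub_apply]
        rw [this, hD x j, hDFx]
        by_cases h : j ∈ F <;> simp [h]
      have hnorm : ∀ x : lp (fun _ : I => H) 2, ‖(D - DF) x‖ ≤ (Cm * ε') * ‖x‖ := by
        intro x
        refine lp.norm_le_of_forall_sum_le (by norm_num)
          (mul_nonneg (mul_nonneg hCm0' hε'.le) (norm_nonneg x)) ?_
        intro s
        have hterm : ∀ j, ‖((D - DF) x : ∀ _ : I, H) j‖ ^ ((2 : ℝ≥0∞).toReal) ≤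
            (Cm * ε') ^ (2 : ℕ) * ‖(x : ∀ _ : I, H) j‖ ^ (2 : ℕ) := by
          intro j
          rw [h2, Real.rpow_natCast]
          have hle : ‖((D - DF) x : ∀ _ : I, H) j‖ ≤ (Cm * ε') * ‖(x : ∀ _ : I, H) j‖ := by
            rw [hcoord x j]
            by_cases h : j ∈ F
            · simp only [h, if_true, norm_zero]
              positivity
            · simp only [h, if_false]
              rw [norm_smul]
              calc ‖m j‖ * ‖R j (x j)‖ ≤ Cm * (ε' * ‖(x : ∀ _ : I, H) j‖) := by
                    refine mul_le_mul (hCm j) ?_ (norm_nonneg _) hCm0'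
                    calc ‖R j (x j)‖ ≤ ‖R j‖ * ‖(x : ∀ _ : I, H) j‖ := (R j).le_opNorm _
                    _ ≤ ε' * ‖(x : ∀ _ : I, H) j‖ :=
                        mul_le_mul_of_nonneg_right (hF j h).le (norm_nonneg _)
              _ = (Cm * ε') * ‖(x : ∀ _ : I, H) j‖ := by ring
          calc ‖((D - DF) x : ∀ _ : I, H) j‖ ^ (2:ℕ) ≤
              ((Cm * ε') * ‖(x : ∀ _ : I, H) j‖) ^ (2:ℕ) :=
                pow_le_pow_left₀ (norm_nonneg _) hle 2
          _ = (Cm * ε') ^ (2:ℕ) * ‖(x : ∀ _ : I, H) j‖ ^ (2:ℕ) := mul_pow _ _ _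
        calc ∑ j ∈ s, ‖((D - DF) x : ∀ _ : I, H) j‖ ^ ((2 : ℝ≥0∞).toReal)
            ≤ ∑ j ∈ s, (Cm * ε') ^ (2:ℕ) * ‖(x : ∀ _ : I, H) j‖ ^ (2:ℕ) :=
              Finset.sum_le_sum fun j _ => hterm j
        _ = (Cm * ε') ^ (2:ℕ) * ∑ j ∈ s, ‖(x : ∀ _ : I, H) j‖ ^ (2:ℕ) := by
              rw [Finset.mul_sum]
        _ ≤ (Cm * ε') ^ (2:ℕ) * ‖x‖ ^ (2:ℕ) := by
              refine mul_le_mul_of_nonneg_left ?_ (by positivity)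
              have := lp.sum_rpow_le_norm_rpow (p := (2 : ℝ≥0∞)) (by norm_num) x s
              rw [h2] at this
              simpa only [Real.rpow_natCast] using this
        _ = ((Cm * ε') * ‖x‖) ^ ((2 : ℝ≥0∞).toReal) := by
              rw [h2, Real.rpow_natCast]; ring
      have hdist : dist D DF < ε := by
        rw [dist_eq_norm]
        have hop : ‖D - DF‖ ≤ Cm * ε' :=
          ContinuousLinearMap.opNorm_le_bound _ (mul_nonneg hCm0' hε'.le) hnorm
        have hne : (Cm + 1) ≠ 0 := by positivity
        have heq : (Cm + 1) * ε' = ε / 2 := by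
          rw [hε'def]; field_simp
        have : Cm * ε' < ε := by nlinarith [hε', hε]
        exact lt_of_le_of_lt hop this
      exact hdist
    exact isClosed_setOf_isCompactOperator.closure_subset hmem
  refine ⟨hDcpt, ?_⟩
  -- Part 2 : multipliers are compact
  intro W V hW hV ω υ hω hυ hβW hβV M hM
  obtain ⟨βW, hbW⟩ := hβW
  obtain ⟨βV, hbV⟩ := hβV
  set TW : H →L[ℂ] lp (fun _ : I => H) 2 :=
    besselCLM W hW ω (fun i => (hω i).1) βW hbW with hTWdef
  set TV : H →L[ℂ] lp (fun _ : I => H) 2 :=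
    besselCLM V hV υ (fun i => (hυ i).1) βV hbV with hTVdef
  have key : ∀ x : H, M x = (ContinuousLinearMap.adjoint TV) (D (TW x)) := by
    intro x
    refine ext_inner_left ℂ (fun z => ?_)
    rw [ContinuousLinearMap.adjoint_inner_right]
    have h1 : HasSum
        (fun i => ⟪z, m i • (υ i * ω i) • fproj (V i) (hV i) ((R i) (fproj (W i) (hW i) x))⟫_ℂ)
        ⟪z, M x⟫_ℂ := by
      have := (hM x).mapL (innerSL ℂ z)
      simpa only [innerSL_apply_apply] using this
    have h2 := lp.hasSum_inner (𝕜 := ℂ) (TV z) (D (TW x))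
    have hterm : ∀ i, ⟪(TV z : ∀ _ : I, H) i, (D (TW x) : ∀ _ : I, H) i⟫_ℂ =
        ⟪z, m i • (υ i * ω i) • fproj (V i) (hV i) ((R i) (fproj (W i) (hW i) x))⟫_ℂ := by
      intro i
      have hTVz : (TV z : ∀ _ : I, H) i = (υ i : ℂ) • fproj (V i) (hV i) z := rfl
      have hDTW : (D (TW x) : ∀ _ : I, H) i =
          m i • (R i) ((ω i : ℂ) • fproj (W i) (hW i) x) := by
        rw [hD (TW x) i]; rfl
      rw [hTVz, hDTW, map_smul, inner_smul_left, inner_smul_right, inner_smul_right,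
        Complex.conj_ofReal, inner_smul_right, ← Complex.coe_smul, inner_smul_right,
        ← fproj_inner]
      push_cast
      ring
    have h2' : HasSum
        (fun i => ⟪z, m i • (υ i * ω i) • fproj (V i) (hV i) ((R i) (fproj (W i) (hW i) x))⟫_ℂ)
        ⟪TV z, D (TW x)⟫_ℂ := by
      simpa only [hterm] using h2
    exact h1.unique h2'
  have hMeq : ⇑M = ⇑(ContinuousLinearMap.adjoint TV) ∘ ⇑D ∘ ⇑TW := funext fun x => key x
  rw [hMeq]
  exact (hDcpt.comp_clm TW).clm_comp (ContinuousLinearMap.adjoint TV)
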